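/- If φ_n, φ_m are continuous on (x1,x2) with ∫_{x1}^{x2} φ_n φ_m = h_n δ_{nm} (finite), φ1 is continuous with ∫_{x1}^{x2} φ1² = ∞, and all required integrals from x1 are finite, then the transformed functions φ_n^{(1)} = φ_n − φ1⟨φ1,φ_n⟩/(1+⟨φ1,φ1⟩) satisfy ∫_{x1}^{x2} φ_n^{(1)} φ_m^{(1)} = h_n δ_{nm}, i.e., the Abraham–Moses transformation preserves inner products of the original eigenfunctions. -/

import Mathlib

open Set MeasureTheory intervalIntegral Filter

private lemma primitive_hasDerivAt {x1 x2 : ℝ} {f : ℝ → ℝ}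
    (hfc : ContinuousOn f (Ioo x1 x2))
    (hfi : ∀ y ∈ Ioo x1 x2, IntegrableOn f (Ioc x1 y)) :
    ∀ y ∈ Ioo x1 x2, HasDerivAt (fun u => ∫ t in x1..u, f t) (f y) y := fun y hy =>
  intervalIntegral.integral_hasDerivAt_right
    ((intervalIntegrable_iff_integrableOn_Ioc_of_le hy.1.le).mpr (hfi y hy))
    (hfc.stronglyMeasurableAtFilter isOpen_Ioo y hy)
    (hfc.continuousAt (isOpen_Ioo.mem_nhds hy))

private lemma primitive_tendsto_left {x1 x2 : ℝ} {f : ℝ → ℝ} (hlt : x1 < x2)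
    (hfi : IntegrableOn f (Ioo x1 x2)) :
    Tendsto (fun y => ∫ t in x1..y, f t) (nhdsWithin x1 (Ioi x1)) (nhds 0) := by
  set c := (x1 + x2)/2 with hc
  have hc1 : x1 < c := by rw [hc]; linarith
  have hc2 : c < x2 := by rw [hc]; linarith
  have hI : IntegrableOn f (Icc x1 c) := by
    rw [integrableOn_Icc_iff_integrableOn_Ioc]
    exact hfi.mono_set (fun t ht => ⟨ht.1, lt_of_le_of_lt ht.2 hc2⟩)
  have hcont := intervalIntegral.continuousOn_primitive hI
  have h0 : ContinuousWithinAt (fun y => ∫ t in Ioc x1 y, f t) (Icc x1 c) x1 :=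
    hcont x1 (left_mem_Icc.mpr hc1.le)
  have h0' : Tendsto (fun y => ∫ t in Ioc x1 y, f t) (nhdsWithin x1 (Ioi x1)) (nhds 0) := by
    have hz : (∫ t in Ioc x1 x1, f t) = 0 := by simp
    rw [← hz]
    refine h0.tendsto.mono_left ?_
    rw [← nhdsWithin_Ioo_eq_nhdsGT hc1]
    exact nhdsWithin_mono _ Ioo_subset_Icc_self
  refine h0'.congr' ?_
  filter_upwards [self_mem_nhdsWithin] with y hy
  exact (intervalIntegral.integral_of_le (le_of_lt hy)).symm

private lemma primitive_tendsto_right {x1 x2 : ℝ} {f : ℝ → ℝ} (hlt : x1 < x2)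
    (hfi : IntegrableOn f (Ioo x1 x2)) :
    Tendsto (fun y => ∫ t in x1..y, f t) (nhdsWithin x2 (Iio x2))
      (nhds (∫ t in Ioo x1 x2, f t)) := by
  have cover : AECover ((volume : Measure ℝ).restrict (Ioo x1 x2)) (nhdsWithin x2 (Iio x2))
      (fun y => Ioc x1 y) :=
    MeasureTheory.aecover_Ioo_of_Ioc tendsto_const_nhds nhdsWithin_le_nhds
  have h1 := cover.integral_tendsto_of_countably_generated hfi
  refine h1.congr' ?_
  filter_upwards [Ioo_mem_nhdsLT_of_mem (show x2 ∈ Ioc x1 x2 from ⟨hlt, le_refl _⟩)] with y hy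
  rw [Measure.restrict_restrict measurableSet_Ioc,
    inter_eq_left.mpr (show Ioc x1 y ⊆ Ioo x1 x2 from fun t ht => ⟨ht.1, lt_of_le_of_lt ht.2 hy.2⟩),
    intervalIntegral.integral_of_le hy.1.le]

theorem am_preserves_inner_products (x1 x2 : ℝ) (hlt : x1 < x2)
    (φ1 : ℝ → ℝ) (φ : ℕ → ℝ → ℝ) (h : ℕ → ℝ)
    (hφ1c : ContinuousOn φ1 (Ioo x1 x2))
    (hφc : ∀ n, ContinuousOn (φ n) (Ioo x1 x2))
    (horth : ∀ n m, ∫ y in Ioo x1 x2, φ n y * φ m y =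
      if n = m then h n else 0)
    (hint1 : ∀ n, IntegrableOn (fun y => φ1 y * φ n y) (Ioo x1 x2))
    (hint2 : ∀ x ∈ Ioo x1 x2, IntegrableOn (fun y => φ1 y ^ 2) (Ioo x1 x))
    (hdiv : Tendsto (fun x => ∫ t in x1..x, φ1 t ^ 2)
      (nhdsWithin x2 (Iio x2)) atTop) :
    ∀ n m,
      ∫ y in Ioo x1 x2,
        (φ n y - φ1 y / (1 + ∫ t in x1..y, φ1 t ^ 2) *
            ∫ t in x1..y, φ1 t * φ n t) *
        (φ m y - φ1 y / (1 + ∫ t in x1..y, φ1 t ^ 2) *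
            ∫ t in x1..y, φ1 t * φ m t) =
      if n = m then h n else 0 := by
  intro n m
  have hsub2 : ∀ y ∈ Ioo x1 x2, Ioc x1 y ⊆ Ioo x1 x2 :=
    fun y hy t ht => ⟨ht.1, lt_of_le_of_lt ht.2 hy.2⟩
  -- derivative of W
  have hWd : ∀ y ∈ Ioo x1 x2,
      HasDerivAt (fun u => ∫ t in x1..u, φ1 t ^ 2) (φ1 y ^ 2) y := by
    refine primitive_hasDerivAt (hφ1c.pow 2) (fun y hy => ?_)
    have hx : (y + x2)/2 ∈ Ioo x1 x2 := ⟨by nlinarith [hy.1, hy.2], by nlinarith [hy.1, hy.2]⟩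
    exact (hint2 _ hx).mono_set
      (fun t ht => ⟨ht.1, lt_of_le_of_lt ht.2 (by nlinarith [hy.1, hy.2])⟩)
  have hVd : ∀ k, ∀ y ∈ Ioo x1 x2,
      HasDerivAt (fun u => ∫ t in x1..u, φ1 t * φ k t) (φ1 y * φ k y) y :=
    fun k => primitive_hasDerivAt (hφ1c.mul (hφc k))
      (fun y hy => (hint1 k).mono_set (hsub2 y hy))
  have hW0 : ∀ y ∈ Ioo x1 x2, 0 ≤ ∫ t in x1..y, φ1 t ^ 2 :=
    fun y hy => intervalIntegral.integral_nonneg hy.1.le (fun u _ => sq_nonneg _)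
  have hppos : ∀ y ∈ Ioo x1 x2, 0 < 1 + ∫ t in x1..y, φ1 t ^ 2 :=
    fun y hy => by linarith [hW0 y hy]
  have hWc : ContinuousOn (fun u => ∫ t in x1..u, φ1 t ^ 2) (Ioo x1 x2) :=
    fun y hy => ((hWd y hy).continuousAt).continuousWithinAt
  have hVc : ∀ k, ContinuousOn (fun u => ∫ t in x1..u, φ1 t * φ k t) (Ioo x1 x2) :=
    fun k y hy => ((hVd k y hy).continuousAt).continuousWithinAt
  -- bound on V
  set C : ℕ → ℝ := fun k => ∫ y in Ioo x1 x2, |φ1 y * φ k y| with hCdef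
  have hVb : ∀ k, ∀ y ∈ Ioo x1 x2, |∫ t in x1..y, φ1 t * φ k t| ≤ C k := by
    intro k y hy
    refine le_trans (intervalIntegral.abs_integral_le_integral_abs hy.1.le) ?_
    rw [intervalIntegral.integral_of_le hy.1.le]
    exact setIntegral_mono_set (hint1 k).abs (ae_of_all _ fun t => abs_nonneg _)
      ((hsub2 y hy).eventuallyLE)
  -- sequences
  have hd : (0:ℝ) < x2 - x1 := sub_pos.mpr hlt
  set a : ℕ → ℝ := fun i => x1 + (x2 - x1)/(i+3) with hadef
  set b : ℕ → ℝ := fun i => x2 - (x2 - x1)/(i+3) with hbdef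
  have hipos : ∀ i : ℕ, (0:ℝ) < (i:ℝ) + 3 := fun i => by positivity
  have hfrac_pos : ∀ i : ℕ, 0 < (x2 - x1)/((i:ℝ)+3) := fun i => div_pos hd (hipos i)
  have hfrac_le : ∀ i : ℕ, (x2 - x1)/((i:ℝ)+3) ≤ (x2 - x1)/3 := fun i =>
    div_le_div_of_nonneg_left hd.le (by norm_num) (by linarith [Nat.cast_nonneg (α := ℝ) i])
  have ha_mem : ∀ i, a i ∈ Ioo x1 x2 := fun i =>
    ⟨by simp only [hadef]; linarith [hfrac_pos i],
     by simp only [hadef]; linarith [hfrac_le i]⟩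
  have hb_mem : ∀ i, b i ∈ Ioo x1 x2 := fun i =>
    ⟨by simp only [hbdef]; linarith [hfrac_le i],
     by simp only [hbdef]; linarith [hfrac_pos i]⟩
  have hab : ∀ i, a i ≤ b i := fun i => by
    simp only [hadef, hbdef]; linarith [hfrac_le i]
  have hsubIcc : ∀ i, Icc (a i) (b i) ⊆ Ioo x1 x2 := fun i t ht =>
    ⟨lt_of_lt_of_le (ha_mem i).1 ht.1, lt_of_le_of_lt ht.2 (hb_mem i).2⟩
  have hfrac0 : Tendsto (fun i : ℕ => (x2 - x1)/((i:ℝ)+3)) atTop (nhds 0) :=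
    Tendsto.div_atTop tendsto_const_nhds
      (tendsto_atTop_add_const_right atTop 3 tendsto_natCast_atTop_atTop)
  have ha : Tendsto a atTop (nhds x1) := by
    have := (tendsto_const_nhds : Tendsto (fun _ : ℕ => x1) atTop (nhds x1)).add hfrac0
    simpa using this
  have hb : Tendsto b atTop (nhds x2) := by
    have := (tendsto_const_nhds : Tendsto (fun _ : ℕ => x2) atTop (nhds x2)).sub hfrac0
    simpa using this
  have ha' : Tendsto a atTop (nhdsWithin x1 (Ioi x1)) :=
    tendsto_nhdsWithin_of_tendsto_nhds_of_eventually_within _ ha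
      (Eventually.of_forall fun i => (ha_mem i).1)
  have hb' : Tendsto b atTop (nhdsWithin x2 (Iio x2)) :=
    tendsto_nhdsWithin_of_tendsto_nhds_of_eventually_within _ hb
      (Eventually.of_forall fun i => (hb_mem i).2)
  have cover : AECover ((volume : Measure ℝ).restrict (Ioo x1 x2)) atTop
      (fun i => Icc (a i) (b i)) := MeasureTheory.aecover_Ioo_of_Icc ha hb
  -- integrability of q
  set q : ℝ → ℝ := fun y => φ1 y ^ 2 / (1 + ∫ t in x1..y, φ1 t ^ 2) ^ 2 with hqdef
  have hqc : ContinuousOn q (Ioo x1 x2) := by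
    refine ContinuousOn.div (hφ1c.pow 2) ((continuousOn_const.add hWc).pow 2) ?_
    exact fun y hy => pow_ne_zero 2 (ne_of_gt (hppos y hy))
  have hqnn : ∀ y, 0 ≤ q y := fun y => div_nonneg (sq_nonneg _) (sq_nonneg _)
  have hGd : ∀ y ∈ Ioo x1 x2,
      HasDerivAt (fun u => -(1 + ∫ t in x1..u, φ1 t ^ 2)⁻¹) (q y) y := by
    intro y hy
    have h1 := (((hWd y hy).const_add 1).inv (ne_of_gt (hppos y hy))).neg
    refine h1.congr_deriv ?_
    simp only [hqdef]
    field_simp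
  have hq_icc : ∀ i, IntegrableOn q (Icc (a i) (b i)) := fun i =>
    (hqc.mono (hsubIcc i)).integrableOn_compact isCompact_Icc
  have hq_bd : ∀ i, (∫ y in Icc (a i) (b i), q y) ≤ 1 := by
    intro i
    rw [MeasureTheory.integral_Icc_eq_integral_Ioc,
      ← intervalIntegral.integral_of_le (hab i)]
    rw [intervalIntegral.integral_eq_sub_of_hasDerivAt
      (fun t ht => hGd t (hsubIcc i (by rwa [uIcc_of_le (hab i)] at ht)))
      ((hqc.mono (by rw [uIcc_of_le (hab i)]; exact hsubIcc i)).intervalIntegrable)]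
    have h1 : (1 + ∫ t in x1..(a i), φ1 t ^ 2)⁻¹ ≤ 1 :=
      inv_le_one_of_one_le₀ (by linarith [hW0 _ (ha_mem i)])
    have h2 : 0 ≤ (1 + ∫ t in x1..(b i), φ1 t ^ 2)⁻¹ :=
      inv_nonneg.mpr (hppos _ (hb_mem i)).le
    linarith
  have hq_int : IntegrableOn q (Ioo x1 x2) := by
    refine cover.integrable_of_integral_bounded_of_nonneg_ae 1 (fun i => ?_)
      (ae_of_all _ hqnn) (Eventually.of_forall fun i => ?_)
    · rw [IntegrableOn, Measure.restrict_restrict measurableSet_Icc,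
        inter_eq_left.mpr (hsubIcc i)]
      exact hq_icc i
    · rw [Measure.restrict_restrict measurableSet_Icc, inter_eq_left.mpr (hsubIcc i)]
      exact hq_bd i
  -- integrability of D
  set D : ℝ → ℝ := fun y =>
    (∫ t in x1..y, φ1 t * φ m t) / (1 + ∫ t in x1..y, φ1 t ^ 2) * (φ1 y * φ n y) +
    (∫ t in x1..y, φ1 t * φ n t) / (1 + ∫ t in x1..y, φ1 t ^ 2) * (φ1 y * φ m y) -
    ((∫ t in x1..y, φ1 t * φ n t) * (∫ t in x1..y, φ1 t * φ m t)) * q y with hDdef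
  have hmeasV : ∀ k, AEStronglyMeasurable
      (fun y => (∫ t in x1..y, φ1 t * φ k t) / (1 + ∫ t in x1..y, φ1 t ^ 2))
      ((volume : Measure ℝ).restrict (Ioo x1 x2)) := fun k =>
    (((hVc k).div (continuousOn_const.add hWc)
      (fun y hy => ne_of_gt (hppos y hy)))).aestronglyMeasurable measurableSet_Ioo
  have hbdV : ∀ k, ∀ᵐ y ∂((volume : Measure ℝ).restrict (Ioo x1 x2)),
      ‖(∫ t in x1..y, φ1 t * φ k t) / (1 + ∫ t in x1..y, φ1 t ^ 2)‖ ≤ C k := by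
    intro k
    rw [ae_restrict_iff' measurableSet_Ioo]
    refine ae_of_all _ fun y hy => ?_
    rw [Real.norm_eq_abs, abs_div, abs_of_pos (hppos y hy)]
    exact le_trans (div_le_self (abs_nonneg _) (by linarith [hW0 y hy])) (hVb k y hy)
  have ht1 : IntegrableOn (fun y =>
      (∫ t in x1..y, φ1 t * φ m t) / (1 + ∫ t in x1..y, φ1 t ^ 2) * (φ1 y * φ n y))
      (Ioo x1 x2) := (hint1 n).bdd_mul (hmeasV m) (hbdV m)
  have ht2 : IntegrableOn (fun y =>
      (∫ t in x1..y, φ1 t * φ n t) / (1 + ∫ t in x1..y, φ1 t ^ 2) * (φ1 y * φ m y))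
      (Ioo x1 x2) := (hint1 m).bdd_mul (hmeasV n) (hbdV n)
  have ht3 : IntegrableOn (fun y =>
      ((∫ t in x1..y, φ1 t * φ n t) * (∫ t in x1..y, φ1 t * φ m t)) * q y)
      (Ioo x1 x2) := by
    refine hq_int.bdd_mul (c := C n * C m)
      (((hVc n).mul (hVc m)).aestronglyMeasurable measurableSet_Ioo) ?_
    rw [ae_restrict_iff' measurableSet_Ioo]
    refine ae_of_all _ fun y hy => ?_
    rw [Real.norm_eq_abs, abs_mul]
    exact mul_le_mul (hVb n y hy) (hVb m y hy) (abs_nonneg _)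
      ((abs_nonneg _).trans (hVb n y hy))
  have hD_int : IntegrableOn D (Ioo x1 x2) := (ht1.add ht2).sub ht3
  -- F and its derivative
  set F : ℝ → ℝ := fun y =>
    (∫ t in x1..y, φ1 t * φ n t) * (∫ t in x1..y, φ1 t * φ m t) /
      (1 + ∫ t in x1..y, φ1 t ^ 2) with hFdef
  have hFd : ∀ y ∈ Ioo x1 x2, HasDerivAt F (D y) y := by
    intro y hy
    have h1 := ((hVd n y hy).mul (hVd m y hy)).div ((hWd y hy).const_add 1)
      (ne_of_gt (hppos y hy))
    refine h1.congr_deriv ?_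
    simp only [hDdef, hqdef, Pi.mul_apply]
    have hp := ne_of_gt (hppos y hy)
    field_simp
  -- limits of F
  have hF1 : Tendsto F (nhdsWithin x1 (Ioi x1)) (nhds 0) := by
    have hb1 := (primitive_tendsto_left hlt (hint1 n)).abs.mul
      (primitive_tendsto_left hlt (hint1 m)).abs
    rw [show |(0:ℝ)| * |(0:ℝ)| = 0 by simp] at hb1
    refine squeeze_zero_norm' ?_ hb1
    filter_upwards [Ioo_mem_nhdsGT_of_mem (show x1 ∈ Ico x1 x2 from ⟨le_refl _, hlt⟩)]
      with y hy
    simp only [hFdef, Real.norm_eq_abs, abs_div]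
    rw [abs_of_pos (hppos y hy), abs_mul]
    exact div_le_self (mul_nonneg (abs_nonneg _) (abs_nonneg _)) (by linarith [hW0 y hy])
  have hF2 : Tendsto F (nhdsWithin x2 (Iio x2)) (nhds 0) := by
    have hdenom : Tendsto (fun y => 1 + ∫ t in x1..y, φ1 t ^ 2)
        (nhdsWithin x2 (Iio x2)) atTop := tendsto_atTop_add_const_left _ 1 hdiv
    have hb2 : Tendsto (fun y => (C n * C m) / (1 + ∫ t in x1..y, φ1 t ^ 2))
        (nhdsWithin x2 (Iio x2)) (nhds 0) :=
      Tendsto.div_atTop tendsto_const_nhds hdenom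
    refine squeeze_zero_norm' ?_ hb2
    filter_upwards [Ioo_mem_nhdsLT_of_mem (show x2 ∈ Ioc x1 x2 from ⟨hlt, le_refl _⟩)]
      with y hy
    simp only [hFdef, Real.norm_eq_abs, abs_div]
    rw [abs_of_pos (hppos y hy), abs_mul]
    refine (div_le_div_iff_of_pos_right (hppos y hy)).mpr ?_
    exact mul_le_mul (hVb n y hy) (hVb m y hy) (abs_nonneg _)
      ((abs_nonneg _).trans (hVb n y hy))
  -- integral of D is zero
  have hD0 : (∫ y in Ioo x1 x2, D y) = 0 := by
    have t1 := cover.integral_tendsto_of_countably_generated hD_int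
    have t2 : Tendsto (fun i => F (b i) - F (a i)) atTop (nhds 0) := by
      have := (hF2.comp hb').sub (hF1.comp ha')
      simpa using this
    have t1' : Tendsto (fun i => F (b i) - F (a i)) atTop
        (nhds (∫ y in Ioo x1 x2, D y)) := by
      refine t1.congr fun i => ?_
      rw [Measure.restrict_restrict measurableSet_Icc, inter_eq_left.mpr (hsubIcc i),
        MeasureTheory.integral_Icc_eq_integral_Ioc,
        ← intervalIntegral.integral_of_le (hab i)]
      exact intervalIntegral.integral_eq_sub_of_hasDerivAt
        (fun t ht => hFd t (hsubIcc i (by rwa [uIcc_of_le (hab i)] at ht)))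
        ((intervalIntegrable_iff_integrableOn_Ioc_of_le (hab i)).mpr
          (hD_int.mono_set (fun t ht => hsubIcc i ⟨ht.1.le, ht.2⟩)))
    exact tendsto_nhds_unique t1' t2
  -- pointwise identity
  have hident : ∀ y ∈ Ioo x1 x2,
      (φ n y - φ1 y / (1 + ∫ t in x1..y, φ1 t ^ 2) * ∫ t in x1..y, φ1 t * φ n t) *
      (φ m y - φ1 y / (1 + ∫ t in x1..y, φ1 t ^ 2) * ∫ t in x1..y, φ1 t * φ m t)
      = φ n y * φ m y - D y := by
    intro y hy
    simp only [hDdef, hqdef]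
    have hp := ne_of_gt (hppos y hy)
    field_simp
    ring
  -- conclusion
  by_cases hnm : IntegrableOn (fun y => φ n y * φ m y) (Ioo x1 x2)
  · rw [setIntegral_congr_fun measurableSet_Ioo (fun y hy => hident y hy),
      integral_sub hnm hD_int, hD0, sub_zero, horth n m]
  · have h1 : ¬ IntegrableOn (fun y =>
        (φ n y - φ1 y / (1 + ∫ t in x1..y, φ1 t ^ 2) * ∫ t in x1..y, φ1 t * φ n t) *
        (φ m y - φ1 y / (1 + ∫ t in x1..y, φ1 t ^ 2) * ∫ t in x1..y, φ1 t * φ m t))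
        (Ioo x1 x2) := by
      intro hcon
      apply hnm
      have h2 : IntegrableOn (fun y =>
          (φ n y - φ1 y / (1 + ∫ t in x1..y, φ1 t ^ 2) * ∫ t in x1..y, φ1 t * φ n t) *
          (φ m y - φ1 y / (1 + ∫ t in x1..y, φ1 t ^ 2) * ∫ t in x1..y, φ1 t * φ m t)
          + D y) (Ioo x1 x2) := hcon.add hD_int
      refine h2.congr_fun (fun y hy => ?_) measurableSet_Ioo
      have := hident y hy
      simp only at this ⊢
      linarith
    rw [integral_undef h1, ← horth n m, integral_undef hnm]
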